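/- arXiv:1711.07636 — 7 statements merged into one kernel-verified Lean document; each statement's English description precedes it below -/
import Mathlib

section
/- A semigroup S has finitely many J-classes if and only if S has finitely many two-sided ideals. -/
/-- Green's relation J: x and y generate the same two-sided ideal. -/
def JRel (S : Type*) [Semigroup S] (x y : S) : Prop :=
  (∃ a b : WithOne S, a * (x : WithOne S) * b = (y : WithOne S)) ∧
  (∃ a b : WithOne S, a * (y : WithOne S) * b = (x : WithOne S))

/-- A two-sided ideal of a semigroup. -/
def IsIdeal (S : Type*) [Semigroup S] (I : Set S) : Prop :=
  I.Nonempty ∧ ∀ a ∈ I, ∀ s : S, s * a ∈ I ∧ a * s ∈ I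

/-- Principal two-sided ideal generated by x. -/
def Pid (S : Type*) [Semigroup S] (x : S) : Set S :=
  {y | ∃ a b : WithOne S, a * (x : WithOne S) * b = (y : WithOne S)}

lemma mem_pid_self (S : Type*) [Semigroup S] (x : S) : x ∈ Pid S x :=
  ⟨1, 1, by simp⟩

lemma pid_trans (S : Type*) [Semigroup S] {x y : S}
    (h : ∃ a b : WithOne S, a * (x : WithOne S) * b = (y : WithOne S)) :
    Pid S y ⊆ Pid S x := by
  obtain ⟨a, b, hab⟩ := h
  rintro z ⟨c, d, hcd⟩
  exact ⟨c * a, b * d, by rw [← hcd, ← hab]; simp [mul_assoc]⟩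

lemma jrel_iff_pid (S : Type*) [Semigroup S] (x y : S) :
    JRel S x y ↔ Pid S x = Pid S y := by
  constructor
  · rintro ⟨h1, h2⟩
    exact le_antisymm (pid_trans S h2) (pid_trans S h1)
  · intro h
    constructor
    · exact (h ▸ mem_pid_self S y : y ∈ Pid S x)
    · exact (h.symm ▸ mem_pid_self S x : x ∈ Pid S y)

lemma ideal_absorb (S : Type*) [Semigroup S] {I : Set S} (hI : IsIdeal S I)
    {x y : S} (hx : x ∈ I) (h : ∃ a b : WithOne S, a * (x : WithOne S) * b = (y : WithOne S)) :
    y ∈ I := by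
  obtain ⟨a, b, hab⟩ := h
  cases a with
  | one =>
    cases b with
    | one =>
      have : (x : WithOne S) = (y : WithOne S) := by simpa using hab
      exact (WithOne.coe_inj.mp this) ▸ hx
    | coe s =>
      have : ((x * s : S) : WithOne S) = (y : WithOne S) := by
        simpa [WithOne.coe_mul] using hab
      exact (WithOne.coe_inj.mp this) ▸ (hI.2 x hx s).2
  | coe t =>
    cases b with
    | one =>
      have : ((t * x : S) : WithOne S) = (y : WithOne S) := by
        simpa [WithOne.coe_mul] using hab
      exact (WithOne.coe_inj.mp this) ▸ (hI.2 x hx t).1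
    | coe s =>
      have : ((t * x * s : S) : WithOne S) = (y : WithOne S) := by
        simpa [WithOne.coe_mul] using hab
      exact (WithOne.coe_inj.mp this) ▸ (hI.2 (t * x) (hI.2 x hx t).1 s).2

lemma pid_isIdeal (S : Type*) [Semigroup S] (x : S) : IsIdeal S (Pid S x) := by
  refine ⟨⟨x, mem_pid_self S x⟩, ?_⟩
  rintro a ⟨c, d, hcd⟩ s
  constructor
  · exact ⟨(s : WithOne S) * c, d, by rw [WithOne.coe_mul, ← hcd]; simp [mul_assoc]⟩
  · exact ⟨c, d * (s : WithOne S), by rw [WithOne.coe_mul, ← hcd]; simp [mul_assoc]⟩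

/-- A semigroup has finitely many J-classes iff it has finitely many two-sided ideals. -/
theorem stmt_1 (S : Type*) [Semigroup S] :
    (Set.range fun x : S => {y | JRel S x y}).Finite ↔
    {I : Set S | IsIdeal S I}.Finite := by
  set f : S → Set S := fun x => {y | JRel S x y} with hf
  constructor
  · intro hJ
    set F : Set S → Set (Set S) := fun I => {C | C ∈ Set.range f ∧ C ⊆ I} with hF
    have hrec : ∀ I ∈ {I : Set S | IsIdeal S I}, I = ⋃₀ F I := by
      intro I hI
      apply Set.eq_of_subset_of_subset
      · intro x hx
        refine ⟨f x, ⟨⟨x, rfl⟩, ?_⟩, ?_⟩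
        · intro y hy
          exact ideal_absorb S hI hx hy.1
        · exact ⟨⟨1, 1, by simp⟩, ⟨1, 1, by simp⟩⟩
      · rintro x ⟨C, ⟨_, hCI⟩, hxC⟩
        exact hCI hxC
    have hinj : Set.InjOn F {I : Set S | IsIdeal S I} := by
      intro I hI J hJ' h
      rw [hrec I hI, hrec J hJ', h]
    have himg : F '' {I : Set S | IsIdeal S I} ⊆ {T | T ⊆ Set.range f} := by
      rintro T ⟨I, _, rfl⟩
      exact fun C hC => hC.1
    have hfin : (F '' {I : Set S | IsIdeal S I}).Finite :=
      Set.Finite.subset hJ.finite_subsets himg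
    exact Set.Finite.of_finite_image hfin hinj
  · intro hI
    have hP : (Set.range (Pid S)).Finite :=
      Set.Finite.subset hI (by rintro _ ⟨x, rfl⟩; exact pid_isIdeal S x)
    have : f = (fun I : Set S => {y | I = Pid S y}) ∘ Pid S := by
      funext x
      ext y
      simp only [hf, Function.comp, Set.mem_setOf_eq]
      exact jrel_iff_pid S x y
    rw [this, Set.range_comp]
    exact hP.image _
end

section
/- A semigroup S has finitely many R-classes if and only if S has finitely many right ideals. -/
/-- Green's relation R: x and y generate the same right ideal. -/
def RRel (S : Type*) [Semigroup S] (x y : S) : Prop :=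
  (∃ a : WithOne S, (x : WithOne S) * a = (y : WithOne S)) ∧
  (∃ a : WithOne S, (y : WithOne S) * a = (x : WithOne S))

/-- A right ideal of a semigroup. -/
def IsRightIdeal (S : Type*) [Semigroup S] (I : Set S) : Prop :=
  I.Nonempty ∧ ∀ a ∈ I, ∀ s : S, a * s ∈ I

/-- Principal right ideal generated by x. -/
def PI (S : Type*) [Semigroup S] (x : S) : Set S :=
  {y | ∃ a : WithOne S, (x : WithOne S) * a = (y : WithOne S)}

lemma mem_PI_self (S : Type*) [Semigroup S] (x : S) : x ∈ PI S x :=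
  ⟨1, mul_one _⟩

lemma PI_trans (S : Type*) [Semigroup S] {x y : S} (h : y ∈ PI S x) :
    PI S y ⊆ PI S x := by
  obtain ⟨a, ha⟩ := h
  rintro z ⟨b, hb⟩
  exact ⟨a * b, by rw [← mul_assoc, ha, hb]⟩

lemma RRel_iff_PI (S : Type*) [Semigroup S] (x y : S) :
    RRel S x y ↔ PI S x = PI S y := by
  constructor
  · rintro ⟨h1, h2⟩
    exact Set.Subset.antisymm (PI_trans S h2) (PI_trans S h1)
  · intro h
    constructor
    · have hy := mem_PI_self S y; rw [← h] at hy; exact hy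
    · have hx := mem_PI_self S x; rw [h] at hx; exact hx

lemma PI_isRightIdeal (S : Type*) [Semigroup S] (x : S) :
    IsRightIdeal S (PI S x) := by
  refine ⟨⟨x, mem_PI_self S x⟩, ?_⟩
  rintro a ⟨b, hb⟩ s
  exact ⟨b * (s : WithOne S), by rw [← mul_assoc, hb, ← WithOne.coe_mul]⟩

lemma PI_subset_of_mem (S : Type*) [Semigroup S] {I : Set S} (hI : IsRightIdeal S I)
    {x : S} (hx : x ∈ I) : PI S x ⊆ I := by
  rintro z ⟨a, ha⟩
  induction a using WithOne.cases_on
  · rw [mul_one] at ha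
    exact (WithOne.coe_inj.mp ha) ▸ hx
  · intro ha
    rw [← WithOne.coe_mul] at ha
    exact (WithOne.coe_inj.mp ha) ▸ hI.2 x hx a

/-- A semigroup has finitely many R-classes iff it has finitely many right ideals. -/
theorem stmt_2 (S : Type*) [Semigroup S] :
    (Set.range fun x : S => {y | RRel S x y}).Finite ↔
    {I : Set S | IsRightIdeal S I}.Finite := by
  have hclass : ∀ x : S, {y | RRel S x y} = {z | PI S z = PI S x} := by
    intro x
    ext z
    simp only [Set.mem_setOf_eq, RRel_iff_PI]
    exact eq_comm
  constructor
  · intro h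
    set f : Set S → Set (Set S) := fun I => (fun x : S => {y | RRel S x y}) '' I with hf
    have hunion : ∀ I ∈ {I : Set S | IsRightIdeal S I}, ⋃₀ f I = I := by
      intro I hI
      ext z
      simp only [hf, Set.sUnion_image, Set.mem_iUnion, Set.mem_setOf_eq]
      constructor
      · rintro ⟨x, hx, hxz⟩
        exact PI_subset_of_mem S hI hx hxz.1
      · intro hz
        exact ⟨z, hz, ⟨1, mul_one _⟩, ⟨1, mul_one _⟩⟩
    apply Set.Finite.of_finite_image (f := f)
    · apply Set.Finite.subset h.finite_subsets
      rintro J ⟨I, _, rfl⟩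
      rintro C ⟨x, _, rfl⟩
      exact Set.mem_range_self x
    · intro I hI J hJ hIJ
      rw [← hunion I hI, ← hunion J hJ, hIJ]
  · intro h
    have : (Set.range fun x : S => {y | RRel S x y}) =
        (fun I : Set S => {z | PI S z = I}) '' Set.range (PI S) := by
      ext C
      constructor
      · rintro ⟨x, rfl⟩
        exact ⟨PI S x, Set.mem_range_self x, (hclass x).symm⟩
      · rintro ⟨I, ⟨x, rfl⟩, rfl⟩
        exact ⟨x, hclass x⟩
    rw [this]
    apply Set.Finite.image
    apply h.subset
    rintro I ⟨x, rfl⟩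
    exact PI_isRightIdeal S x
end

section
/- Let S be a periodic semigroup. The set Gr S of all group elements of S is a right ideal of S if and only if the identity s^{ω+1} t = (s^{ω+1} t)^{ω+1} holds for all s, t in S, where for each element x, x^ω denotes the (unique) idempotent power of x and x^{ω+1} := x x^ω. -/
/-- `spow s n = s^(n+1)` in a semigroup. -/
def spow {S : Type*} [Semigroup S] (s : S) : ℕ → S
  | 0 => s
  | n + 1 => spow s n * s

lemma mul_spow {S : Type*} [Semigroup S] (s : S) (n : ℕ) :
    s * spow s n = spow s (n + 1) := by
  induction n with
  | zero => rfl
  | succ n ih =>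
    show s * (spow s n * s) = spow s (n + 1) * s
    rw [← mul_assoc, ih]

lemma spow_add {S : Type*} [Semigroup S] (s : S) (m n : ℕ) :
    spow s (m + n + 1) = spow s m * spow s n := by
  induction n with
  | zero => rfl
  | succ n ih =>
    show spow s (m + n + 1) * s = spow s m * (spow s n * s)
    rw [ih, mul_assoc]

lemma spow_spow {S : Type*} [Semigroup S] (s : S) (m n : ℕ) :
    spow (spow s m) n = spow s (m * n + m + n) := by
  induction n with
  | zero => simp [spow]
  | succ n ih =>
    show spow (spow s m) n * spow s m = _
    rw [ih, ← spow_add]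
    congr 1
    ring

lemma spow_idem {S : Type*} [Semigroup S] (e : S) (he : e * e = e) (k : ℕ) :
    spow e k = e := by
  induction k with
  | zero => rfl
  | succ k ih => show spow e k * e = e; rw [ih, he]

/-- In a periodic semigroup (each element `s` having a unique idempotent power
`ω s`), the set `Gr S = {s | s = s * ω s}` of group elements is a right ideal
iff the identity `s^{ω+1} t = (s^{ω+1} t)^{ω+1}` holds for all `s, t`. -/
theorem stmt_6 (S : Type*) [Semigroup S] (ω : S → S)
    (hpow : ∀ s : S, ∃ n : ℕ, ω s = spow s n)
    (hidem : ∀ s : S, ω s * ω s = ω s)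
    (huniq : ∀ (s : S) (n : ℕ), spow s n * spow s n = spow s n → spow s n = ω s) :
    (∀ s ∈ {s : S | s = s * ω s}, ∀ t : S, s * t ∈ {s : S | s = s * ω s}) ↔
    (∀ s t : S, (s * ω s) * t = ((s * ω s) * t) * ω ((s * ω s) * t)) := by
  have key : ∀ s : S, s * ω s = (s * ω s) * ω (s * ω s) := by
    intro s
    obtain ⟨n, hn⟩ := hpow s
    have hx : s * ω s = spow s (n + 1) := by rw [hn, mul_spow]
    -- spow (s*ωs) n = ω s
    have h1 : spow (s * ω s) n = ω s := by
      rw [hx, spow_spow]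
      have : (n + 1) * n + (n + 1) + n = n * (n + 1) + n + (n + 1) := by ring
      rw [this, ← spow_spow, hn.symm, spow_idem _ (hidem s)]
    have h2 : spow (s * ω s) n = ω (s * ω s) := by
      apply huniq
      rw [h1]; exact hidem s
    rw [← h2, h1]
    conv_lhs => rw [← hidem s, ← mul_assoc]
  constructor
  · intro h s t
    exact h (s * ω s) (key s) t
  · intro h s hs t
    have := h s t
    rw [← hs] at this
    exact this
end

section
/- Let G be a group. Define L♭(G) on the disjoint union of G, a copy {ḡ : g ∈ G} of G, and a zero element 0, with multiplication extending G, g·h̄ = (gh)‾, ḡ·h = ḡ, and all other products (including ḡ·h̄ and any product with 0) equal to 0. Define R♭(G) dually (g·h̃ = h̃, g̃·h = (gh)~, other products 0). Then R♭(G) is a homomorphic image of a subsemigroup of L♭(G) × L♭(G); specifically, T = {(g,g) : g ∈ G} ∪ ({ḡ} × G pairs) ∪ ({0} × G pairs) is a subsemigroup and φ((g,g)) = g, φ((ḡ,h)) = (g^{-1}h)~, φ((0,g)) = 0 is a surjective homomorphism onto R♭(G). -/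
/-- The 'flat' semigroup L♭(G): G ∪ {ḡ : g ∈ G} ∪ {0}, with g·h̄ = (gh)‾,
ḡ·h = ḡ, and all other products (outside G) equal to 0. -/
inductive Flat (G : Type*) | elt (g : G) | bar (g : G) | zero

def Flat.mul {G : Type*} [Semigroup G] : Flat G → Flat G → Flat G
  | .elt g, .elt h => .elt (g * h)
  | .elt g, .bar h => .bar (g * h)
  | .bar g, .elt _ => .bar g
  | _, _ => .zero

instance {G : Type*} [Semigroup G] : Mul (Flat G) := ⟨Flat.mul⟩

instance {G : Type*} [Semigroup G] : Semigroup (Flat G) where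
  mul_assoc a b c := by
    cases a <;> cases b <;> cases c <;>
      first
        | rfl
        | exact congrArg Flat.elt (mul_assoc _ _ _)
        | exact congrArg Flat.bar (mul_assoc _ _ _)

/-- The 'flat' semigroup R♭(G): G ∪ {g̃ : g ∈ G} ∪ {0}, with g·h̃ = h̃,
g̃·h = (gh)~, and all other products (outside G) equal to 0. -/
inductive FlatR (G : Type*) | elt (g : G) | til (g : G) | zero

def FlatR.mul {G : Type*} [Semigroup G] : FlatR G → FlatR G → FlatR G
  | .elt g, .elt h => .elt (g * h)
  | .elt _, .til h => .til h
  | .til g, .elt h => .til (g * h)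
  | _, _ => .zero

instance {G : Type*} [Semigroup G] : Mul (FlatR G) := ⟨FlatR.mul⟩

instance {G : Type*} [Semigroup G] : Semigroup (FlatR G) where
  mul_assoc a b c := by
    cases a <;> cases b <;> cases c <;>
      first
        | rfl
        | exact congrArg FlatR.elt (mul_assoc _ _ _)
        | exact congrArg FlatR.til (mul_assoc _ _ _)

/-- The subsemigroup T of L♭(G) × L♭(G). -/
def Tset (G : Type*) [Group G] : Set (Flat G × Flat G) :=
  {p | (∃ g : G, p = (.elt g, .elt g)) ∨ (∃ g h : G, p = (.bar g, .elt h)) ∨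
    (∃ g : G, p = (.zero, .elt g))}

/-- The map φ : T → R♭(G). -/
def phi15 {G : Type*} [Group G] : Flat G × Flat G → FlatR G
  | (.elt g, _) => .elt g
  | (.bar g, .elt h) => .til (g⁻¹ * h)
  | _ => .zero

/-- R♭(G) is a homomorphic image of the subsemigroup T of L♭(G) × L♭(G). -/
theorem stmt_15 (G : Type*) [Group G] :
    (∀ p ∈ Tset G, ∀ q ∈ Tset G, p * q ∈ Tset G) ∧
    (∀ p ∈ Tset G, ∀ q ∈ Tset G, phi15 (p * q) = phi15 p * phi15 q) ∧
    (∀ r : FlatR G, ∃ p ∈ Tset G, phi15 p = r) := by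
  refine ⟨?_, ?_, ?_⟩
  · rintro p (⟨g,rfl⟩|⟨g,h,rfl⟩|⟨g,rfl⟩) q (⟨a,rfl⟩|⟨a,b,rfl⟩|⟨a,rfl⟩) <;>
      first
        | exact Or.inl ⟨_, rfl⟩
        | exact Or.inr (Or.inl ⟨_, _, rfl⟩)
        | exact Or.inr (Or.inr ⟨_, rfl⟩)
  · rintro p (⟨g,rfl⟩|⟨g,h,rfl⟩|⟨g,rfl⟩) q (⟨a,rfl⟩|⟨a,b,rfl⟩|⟨a,rfl⟩) <;>
      first
        | rfl
        | (show FlatR.til _ = FlatR.til _; congr 1; group)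
  · rintro (g | g | _)
    · exact ⟨(.elt g, .elt g), Or.inl ⟨g, rfl⟩, rfl⟩
    · exact ⟨(.bar 1, .elt g), Or.inr (Or.inl ⟨1, g, rfl⟩), by
        show FlatR.til _ = _; rw [inv_one, one_mul]⟩
    · exact ⟨(.zero, .elt 1), Or.inr (Or.inr ⟨1, rfl⟩), rfl⟩
end

section
/- Let G1 and G2 be groups of finite exponent dividing n with n > 1, and let u = v be a semigroup identity in letters x_1,…,x_m that holds in G1 but fails in G2. Then the identity (x_1⋯x_m)^n u = (x_1⋯x_m)^n v holds in the semigroup L♭(G1) but fails in L♭(G2). -/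
/-- The word (x₁⋯x_m)ⁿ in the free semigroup on m letters (m > 0, n ≥ 1). -/
noncomputable def prefWord (m n : ℕ) (hm : 0 < m) : FreeSemigroup (Fin m) :=
  ⟨⟨0, hm⟩, (List.finRange m).tail ++ (List.replicate (n - 1) (List.finRange m)).flatten⟩

namespace FlatAux

variable {G : Type*} [Semigroup G]

/-- Predicate: the element lies in the copy of `G` inside `Flat G`. -/
def IsE : Flat G → Prop
  | .elt _ => True
  | _ => False

lemma exists_elt {x : Flat G} (h : IsE x) : ∃ g, x = Flat.elt g := by
  cases x with
  | elt g => exact ⟨g, rfl⟩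
  | bar g => exact absurd h (by simp [IsE])
  | zero => exact absurd h (by simp [IsE])

lemma notE_mul {a : Flat G} (h : ¬ IsE a) (x : Flat G) : ¬ IsE (a * x) := by
  cases a <;> cases x <;> simp_all [IsE, HMul.hMul, Mul.mul, Flat.mul]

lemma mul_notE (a : Flat G) {x : Flat G} (h : ¬ IsE x) : ¬ IsE (a * x) := by
  cases a <;> cases x <;> simp_all [IsE, HMul.hMul, Mul.mul, Flat.mul]

lemma notE_mul_notE {a b : Flat G} (ha : ¬ IsE a) (hb : ¬ IsE b) : a * b = Flat.zero := by
  cases a <;> cases b <;> simp_all [IsE, HMul.hMul, Mul.mul, Flat.mul]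

lemma zero_mul' (x : Flat G) : (Flat.zero : Flat G) * x = Flat.zero := by
  cases x <;> rfl

variable {α : Type*} (f : α → Flat G)

lemma foldl_zero (l : List α) :
    l.foldl (fun a b => a * f b) Flat.zero = Flat.zero := by
  induction l with
  | nil => rfl
  | cons x l ih => simpa [zero_mul'] using ih

lemma notE_foldl {s : Flat G} (hs : ¬ IsE s) (l : List α) :
    ¬ IsE (l.foldl (fun a b => a * f b) s) := by
  induction l generalizing s with
  | nil => exact hs
  | cons x l ih => exact ih (notE_mul hs _)

lemma mem_notE_foldl {i : α} {l : List α} (hi : i ∈ l) (h : ¬ IsE (f i)) (s : Flat G) :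
    ¬ IsE (l.foldl (fun a b => a * f b) s) := by
  induction l generalizing s with
  | nil => simp at hi
  | cons x l ih =>
    rcases List.mem_cons.mp hi with rfl | hi
    · exact notE_foldl f (mul_notE _ h) l
    · exact ih hi _

lemma foldl_eq_zero {s : Flat G} (hs : ¬ IsE s) {i : α} {l : List α}
    (hi : i ∈ l) (h : ¬ IsE (f i)) :
    l.foldl (fun a b => a * f b) s = Flat.zero := by
  obtain ⟨l1, l2, rfl⟩ := List.append_of_mem hi
  rw [List.foldl_append, List.foldl_cons,
    notE_mul_notE (notE_foldl f hs l1) h, foldl_zero]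

lemma finRange_cons {m : ℕ} (hm : 0 < m) :
    List.finRange m = (⟨0, hm⟩ : Fin m) :: (List.finRange m).tail := by
  obtain ⟨m', rfl⟩ : ∃ m', m = m' + 1 := ⟨m - 1, by omega⟩
  rw [List.finRange_succ]
  rfl

/-- If some letter is assigned a non-`elt` value, then `(x₁⋯x_m)ⁿ · w`
evaluates to zero (using n ≥ 2, every letter occurs at least twice). -/
lemma pref_zero {G : Type*} [Semigroup G] {m n : ℕ} (hm : 0 < m) (hn : 1 < n)
    (f : Fin m → Flat G) {i₀ : Fin m} (h : ¬ IsE (f i₀)) (w : FreeSemigroup (Fin m)) :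
    FreeSemigroup.lift f (prefWord m n hm * w) = Flat.zero := by
  obtain ⟨k, hk⟩ : ∃ k, n = k + 2 := ⟨n - 2, by omega⟩
  have hval : FreeSemigroup.lift f (prefWord m n hm * w) =
      (((List.finRange m).tail ++ ((List.finRange m) ++
        (List.replicate k (List.finRange m)).flatten ++ (w.1 :: w.2)))).foldl
        (fun a b => a * f b) (f ⟨0, hm⟩) := by
    subst hk
    show (((List.finRange m).tail ++
        (List.replicate (k + 1) (List.finRange m)).flatten) ++ (w.1 :: w.2)).foldl
        (fun a b => a * f b) (f ⟨0, hm⟩) = _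
    rw [List.replicate_succ, List.flatten_cons, List.append_assoc, List.append_assoc]
  rw [hval, List.foldl_append, List.foldl_append, List.foldl_append]
  have hmem : i₀ ∈ List.finRange m := List.mem_finRange i₀
  have h1 : ¬ IsE (((List.finRange m).tail).foldl (fun a b => a * f b) (f ⟨0, hm⟩)) := by
    rw [finRange_cons hm, List.mem_cons] at hmem
    rcases hmem with hmem | hmem
    · exact notE_foldl f (hmem ▸ h) _
    · exact mem_notE_foldl f hmem h _
  rw [foldl_eq_zero f h1 (List.mem_finRange i₀) h, foldl_zero, foldl_zero]

/-- The embedding `G → Flat G` as a semigroup homomorphism. -/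
def eltHom (G : Type*) [Semigroup G] : G →ₙ* Flat G := ⟨Flat.elt, fun _ _ => rfl⟩

lemma lift_elt {G : Type*} [Semigroup G] {m : ℕ} (g : Fin m → G) (w : FreeSemigroup (Fin m)) :
    FreeSemigroup.lift (fun i => Flat.elt (g i)) w = Flat.elt (FreeSemigroup.lift g w) := by
  have h : FreeSemigroup.lift (fun i => Flat.elt (g i)) =
      (eltHom G).comp (FreeSemigroup.lift g) :=
    FreeSemigroup.hom_ext (by funext i; simp [eltHom]; rfl)
  rw [h]; rfl

end FlatAux

/-- If the identity u = v (in m letters) holds in G₁ but fails in G₂, both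
groups having exponent dividing n > 1, then (x₁⋯x_m)ⁿ u = (x₁⋯x_m)ⁿ v holds
in L♭(G₁) but fails in L♭(G₂). -/
theorem stmt_16 (m n : ℕ) (hm : 0 < m) (hn : 1 < n)
    (G1 G2 : Type*) [Group G1] [Group G2]
    (hexp1 : ∀ g : G1, g ^ n = 1) (hexp2 : ∀ g : G2, g ^ n = 1)
    (u v : FreeSemigroup (Fin m))
    (hG1 : ∀ f : Fin m → G1, FreeSemigroup.lift f u = FreeSemigroup.lift f v)
    (hG2 : ¬ ∀ f : Fin m → G2, FreeSemigroup.lift f u = FreeSemigroup.lift f v) :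
    (∀ f : Fin m → Flat G1,
      FreeSemigroup.lift f (prefWord m n hm * u) =
        FreeSemigroup.lift f (prefWord m n hm * v)) ∧
    ¬ ∀ f : Fin m → Flat G2,
      FreeSemigroup.lift f (prefWord m n hm * u) =
        FreeSemigroup.lift f (prefWord m n hm * v) := by
  constructor
  · intro f
    by_cases hf : ∀ i, FlatAux.IsE (f i)
    · choose g hg using fun i => FlatAux.exists_elt (hf i)
      have hfe : f = fun i => Flat.elt (g i) := funext hg
      rw [hfe, FlatAux.lift_elt, FlatAux.lift_elt, map_mul, map_mul, hG1 g]
    · push_neg at hf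
      obtain ⟨i₀, h⟩ := hf
      rw [FlatAux.pref_zero hm hn f h u, FlatAux.pref_zero hm hn f h v]
  · intro hcon
    push_neg at hG2
    obtain ⟨g, hg⟩ := hG2
    have hc := hcon (fun i => Flat.elt (g i))
    rw [FlatAux.lift_elt, FlatAux.lift_elt, map_mul, map_mul] at hc
    exact hg (mul_left_cancel (Flat.elt.inj hc))
end

section
/- Let G be a group, H = {h ∈ G : h·z = e·z} the stabilizer-type subgroup arising from a left-zero action: suppose T = G ∪ Gz is a semigroup in which G is a group with identity e, Gz is an ideal of left zeros, and the map g ↦ gz is the action of left multiplication. Then H is a subgroup of G, and for g1, g2 ∈ G one has g1 z = g2 z if and only if g1 H = g2 H; consequently T is isomorphic to L_H(G). -/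
/-- The multiplication of the semigroup L_H(G). -/
def LHmul {G : Type*} [Group G] (H : Subgroup G) :
    G ⊕ (G ⧸ H) → G ⊕ (G ⧸ H) → G ⊕ (G ⧸ H)
  | .inl g1, .inl g2 => .inl (g1 * g2)
  | .inl g1, .inr c => .inr (g1 • c)
  | .inr c, _ => .inr c

/-- Let T be a semigroup which is the disjoint union of (a copy of) a group G
and the ideal Gz of left zeros. Then H = {h | hz = 1z} is a subgroup of G,
g₁z = g₂z iff g₁H = g₂H, and T is isomorphic to L_H(G). -/
theorem stmt_18 (T : Type*) [Semigroup T] (G : Type*) [Group G]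
    (φ : G → T) (hinj : Function.Injective φ)
    (hhom : ∀ a b : G, φ (a * b) = φ a * φ b)
    (z : T)
    (hlz : ∀ (g : G) (t : T), (φ g * z) * t = φ g * z)
    (hcover : ∀ t : T, (∃ g : G, t = φ g) ∨ ∃ g : G, t = φ g * z)
    (hdisj : ∀ g h : G, φ g * z ≠ φ h) :
    ((1 : G) ∈ {h : G | φ h * z = φ 1 * z} ∧
      (∀ a b : G, a ∈ {h : G | φ h * z = φ 1 * z} →
        b ∈ {h : G | φ h * z = φ 1 * z} → a * b ∈ {h : G | φ h * z = φ 1 * z}) ∧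
      (∀ a : G, a ∈ {h : G | φ h * z = φ 1 * z} →
        a⁻¹ ∈ {h : G | φ h * z = φ 1 * z})) ∧
    (∀ g1 g2 : G, φ g1 * z = φ g2 * z ↔
      ∃ h ∈ {h : G | φ h * z = φ 1 * z}, g2 = g1 * h) ∧
    (∀ Hs : Subgroup G, (∀ h : G, h ∈ Hs ↔ φ h * z = φ 1 * z) →
      ∃ ψ : G ⊕ (G ⧸ Hs) → T, Function.Bijective ψ ∧
        ∀ x y : G ⊕ (G ⧸ Hs), ψ (LHmul Hs x y) = ψ x * ψ y) := by
  have mulz : ∀ a b : G, φ a * (φ b * z) = φ (a * b) * z := by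
    intro a b; rw [hhom, mul_assoc]
  have key : ∀ g1 g2 : G, φ g1 * z = φ g2 * z ↔ φ (g1⁻¹ * g2) * z = φ 1 * z := by
    intro g1 g2
    constructor
    · intro h
      rw [← mulz, ← h, mulz, inv_mul_cancel]
    · intro h
      have := congrArg (fun t => φ g1 * t) h
      simp only [mulz, mul_inv_cancel_left, mul_one] at this
      exact this.symm
  refine ⟨⟨rfl, ?_, ?_⟩, ?_, ?_⟩
  · intro a b ha hb
    simp only [Set.mem_setOf_eq] at *
    rw [← mulz, hb, mulz, mul_one, ha]
  · intro a ha
    simp only [Set.mem_setOf_eq] at *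
    have h := (key a 1).mp (by simpa using ha)
    simpa using h
  · intro g1 g2
    rw [key]
    constructor
    · intro h
      exact ⟨g1⁻¹ * g2, h, by group⟩
    · rintro ⟨h, hh, rfl⟩
      simpa using hh
  · intro Hs hHs
    have hq : ∀ g1 g2 : G, (QuotientGroup.mk g1 : G ⧸ Hs) = QuotientGroup.mk g2 ↔
        φ g1 * z = φ g2 * z := by
      intro g1 g2
      rw [QuotientGroup.eq, hHs, ← key]
    refine ⟨Sum.elim φ (fun c => Quotient.liftOn' c (fun g => φ g * z)
      (fun a b hab => (hq a b).mp (Quotient.sound' hab))), ⟨?_, ?_⟩, ?_⟩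
    · rintro (g1 | c1) (g2 | c2) h
      · simp only [Sum.elim_inl] at h
        exact congrArg Sum.inl (hinj h)
      · induction c2 using QuotientGroup.induction_on with
        | H g2 =>
          exact absurd h.symm (hdisj g2 g1)
      · induction c1 using QuotientGroup.induction_on with
        | H g1 =>
          exact absurd h (hdisj g1 g2)
      · induction c1 using QuotientGroup.induction_on with
        | H g1 =>
        induction c2 using QuotientGroup.induction_on with
        | H g2 =>
          exact congrArg Sum.inr ((hq g1 g2).mpr h)
    · intro t
      rcases hcover t with ⟨g, rfl⟩ | ⟨g, rfl⟩
      · exact ⟨.inl g, rfl⟩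
      · exact ⟨.inr (QuotientGroup.mk g), rfl⟩
    · rintro (g1 | c1) (g2 | c2)
      · exact hhom g1 g2
      · induction c2 using QuotientGroup.induction_on with
        | H g2 =>
          simp only [LHmul, Sum.elim_inl, Sum.elim_inr]
          rw [show g1 • (QuotientGroup.mk g2 : G ⧸ Hs) = QuotientGroup.mk (g1 * g2) from rfl]
          exact (mulz g1 g2).symm
      · induction c1 using QuotientGroup.induction_on with
        | H g1 =>
          exact (hlz g1 (φ g2)).symm
      · induction c1 using QuotientGroup.induction_on with
        | H g1 =>
        induction c2 using QuotientGroup.induction_on with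
        | H g2 =>
          exact (hlz g1 (φ g2 * z)).symm
end

section
/- Let S be a periodic semigroup with central idempotents. Then the map s ↦ s^ω assigning to each element its idempotent power is a semigroup homomorphism from S onto the semilattice E(S) of idempotents of S. -/
/-- In a periodic semigroup with central idempotents, the map s ↦ s^ω taking
each element to its (unique) idempotent power is a semigroup homomorphism of S
onto the semilattice E(S) of idempotents. -/
theorem stmt_19 (S : Type*) [Semigroup S] (ω : S → S)
    (hpow : ∀ s : S, ∃ n : ℕ, ω s = spow s n)
    (hidem : ∀ s : S, ω s * ω s = ω s)
    (huniq : ∀ (s : S) (n : ℕ), spow s n * spow s n = spow s n → spow s n = ω s)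
    (hcentral : ∀ e s : S, e * e = e → e * s = s * e) :
    (∀ s t : S, ω (s * t) = ω s * ω t) ∧
    Set.range ω = {e : S | e * e = e} := by
  -- basic spow lemmas
  have spow_succ : ∀ (x : S) (k : ℕ), spow x (k+1) = spow x k * x := fun _ _ => rfl
  have spow_add : ∀ (x : S) (m k : ℕ), spow x (m + k + 1) = spow x m * spow x k := by
    intro x m k
    induction k with
    | zero => rfl
    | succ k ih =>
      show spow x (m + k + 1) * x = spow x m * (spow x k * x)
      rw [ih, mul_assoc]
  have spow_succ' : ∀ (x : S) (k : ℕ), spow x (k+1) = x * spow x k := by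
    intro x k
    have h := spow_add x 0 k
    rw [Nat.zero_add] at h
    exact h
  -- expansion of powers of a product
  have spow_ab : ∀ (a b : S) (k : ℕ), spow (a*b) (k+1) = a * (spow (b*a) k * b) := by
    intro a b k
    induction k with
    | zero =>
      show (a*b) * (a*b) = a * ((b*a) * b)
      simp [mul_assoc]
    | succ k ih =>
      rw [spow_succ, ih, spow_succ]
      simp [mul_assoc]
  -- ω(x*c) = ω x * c for central idempotent c
  have spow_mul_c : ∀ (x c : S), c * c = c → (∀ s : S, c * s = s * c) →
      ∀ k : ℕ, spow (x * c) k = spow x k * c := by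
    intro x c hc hcen k
    induction k with
    | zero => rfl
    | succ k ih =>
      rw [spow_succ, ih, spow_succ]
      calc spow x k * c * (x * c) = spow x k * (c * x * c) := by simp [mul_assoc]
        _ = spow x k * (x * c * c) := by rw [hcen x]
        _ = spow x k * (x * c) := by rw [mul_assoc x c c, hc]
        _ = spow x k * x * c := by rw [mul_assoc]
  have omega_mul_c : ∀ (x c : S), c * c = c → (∀ s : S, c * s = s * c) →
      ω (x * c) = ω x * c := by
    intro x c hc hcen
    obtain ⟨n, hn⟩ := hpow x
    have h1 : spow (x*c) n = ω x * c := by rw [spow_mul_c x c hc hcen, ← hn]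
    have hid : (ω x * c) * (ω x * c) = ω x * c := by
      calc ω x * c * (ω x * c) = ω x * (c * ω x) * c := by simp [mul_assoc]
        _ = ω x * (ω x * c) * c := by rw [hcen (ω x)]
        _ = (ω x * ω x) * (c * c) := by simp [mul_assoc]
        _ = ω x * c := by rw [hidem x, hc]
    have h2 := huniq (x*c) n (by rw [h1]; exact hid)
    rw [h1] at h2
    exact h2.symm
  -- Lemma G, left-inverse version
  have lemG_left : ∀ (u v c : S), c * c = c → (∀ s : S, c * s = s * c) →
      c * u = u → v * u = c → ω u = c := by
    intro u v c hc hcen hcu hvu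
    have habs : ∀ k : ℕ, c * spow u k = spow u k := by
      intro k
      induction k with
      | zero => exact hcu
      | succ k ih => rw [spow_succ, ← mul_assoc, ih]
    have hk : ∀ k : ℕ, spow v k * spow u k = c := by
      intro k
      induction k with
      | zero => exact hvu
      | succ k ih =>
        rw [spow_succ v, spow_succ' u]
        calc spow v k * v * (u * spow u k) = spow v k * (v * u * spow u k) := by
              simp [mul_assoc]
          _ = spow v k * (c * spow u k) := by rw [hvu]
          _ = spow v k * spow u k := by rw [habs k]
          _ = c := ih
    obtain ⟨n, hn⟩ := hpow u
    have h1 : c * ω u = ω u := by rw [hn]; exact habs n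
    have h3 : spow v n * ω u = c := by rw [hn]; exact hk n
    have h2 : c * ω u = c := by
      calc c * ω u = spow v n * ω u * ω u := by rw [h3]
        _ = spow v n * (ω u * ω u) := mul_assoc _ _ _
        _ = spow v n * ω u := by rw [hidem u]
        _ = c := h3
    rw [← h1]; exact h2
  -- Lemma G, right-inverse version
  have lemG_right : ∀ (u v c : S), c * c = c → (∀ s : S, c * s = s * c) →
      c * u = u → u * v = c → ω u = c := by
    intro u v c hc hcen hcu huv
    have huc : u * c = u := by rw [← hcen u, hcu]
    have hk : ∀ k : ℕ, spow u k * spow v k = c := by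
      intro k
      induction k with
      | zero => exact huv
      | succ k ih =>
        rw [spow_succ' u, spow_succ v]
        calc u * spow u k * (spow v k * v) = u * (spow u k * spow v k * v) := by
              simp [mul_assoc]
          _ = u * (c * v) := by rw [ih]
          _ = u * c * v := (mul_assoc _ _ _).symm
          _ = u * v := by rw [huc]
          _ = c := huv
    have habs : ∀ k : ℕ, c * spow u k = spow u k := by
      intro k
      induction k with
      | zero => exact hcu
      | succ k ih => rw [spow_succ, ← mul_assoc, ih]
    obtain ⟨n, hn⟩ := hpow u
    have h1 : c * ω u = ω u := by rw [hn]; exact habs n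
    have h3 : ω u * spow v n = c := by rw [hn]; exact hk n
    have h2 : ω u * c = c := by
      calc ω u * c = ω u * (ω u * spow v n) := by rw [h3]
        _ = (ω u * ω u) * spow v n := (mul_assoc _ _ _).symm
        _ = ω u * spow v n := by rw [hidem u]
        _ = c := h3
    rw [← h1, hcen (ω u)]; exact h2
  -- existence of a left inverse to ω x
  have inv_ex : ∀ x : S, ∃ v : S, v * x = ω x := by
    intro x
    obtain ⟨n, hn⟩ := hpow x
    cases n with
    | zero =>
      refine ⟨x, ?_⟩
      have h := hidem x
      rw [hn] at h
      rw [hn]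
      exact h
    | succ n =>
      refine ⟨spow x n, ?_⟩
      rw [hn]
      exact (spow_succ x n).symm
  constructor
  · intro a b
    -- notation: e = ω a, f = ω b, g = ω (a*b)
    have he : ω a * ω a = ω a := hidem a
    have hf : ω b * ω b = ω b := hidem b
    have hg : ω (a*b) * ω (a*b) = ω (a*b) := hidem (a*b)
    have he_cen : ∀ s : S, ω a * s = s * ω a := fun s => hcentral _ s he
    have hf_cen : ∀ s : S, ω b * s = s * ω b := fun s => hcentral _ s hf
    have hg_cen : ∀ s : S, ω (a*b) * s = s * ω (a*b) := fun s => hcentral _ s hg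
    obtain ⟨n, hn⟩ := hpow (a*b)
    have hgN : spow (a*b) (n + n + 1) = ω (a*b) := by
      rw [spow_add, ← hn, hidem]
    -- Step 1 : ω a * ω (a*b) = ω (a*b)
    have har : a * (spow (b*a) (n+n) * b) = ω (a*b) := by
      rw [← spow_ab a b (n+n)]; exact hgN
    have heg : ω a * ω (a*b) = ω (a*b) := by
      have hcu : ω (a*b) * (a * ω (a*b)) = a * ω (a*b) := by
        calc ω (a*b) * (a * ω (a*b)) = (ω (a*b) * a) * ω (a*b) := (mul_assoc _ _ _).symm
          _ = (a * ω (a*b)) * ω (a*b) := by rw [hg_cen a]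
          _ = a * (ω (a*b) * ω (a*b)) := mul_assoc _ _ _
          _ = a * ω (a*b) := by rw [hg]
      have huv : (a * ω (a*b)) * (spow (b*a) (n+n) * b) = ω (a*b) := by
        calc (a * ω (a*b)) * (spow (b*a) (n+n) * b)
            = a * (ω (a*b) * (spow (b*a) (n+n) * b)) := mul_assoc _ _ _
          _ = a * ((spow (b*a) (n+n) * b) * ω (a*b)) := by rw [hg_cen]
          _ = (a * (spow (b*a) (n+n) * b)) * ω (a*b) := (mul_assoc _ _ _).symm
          _ = ω (a*b) * ω (a*b) := by rw [har]
          _ = ω (a*b) := hg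
      have h1 : ω (a * ω (a*b)) = ω (a*b) :=
        lemG_right (a * ω (a*b)) (spow (b*a) (n+n) * b) (ω (a*b)) hg hg_cen hcu huv
      have h2 : ω (a * ω (a*b)) = ω a * ω (a*b) := omega_mul_c a (ω (a*b)) hg hg_cen
      rw [← h2, h1]
    -- Step 2 : ω b * ω (a*b) = ω (a*b)
    have hlb : (spow (a*b) (n+n) * a) * b = ω (a*b) := by
      rw [mul_assoc, ← spow_succ]; exact hgN
    have hfg : ω b * ω (a*b) = ω (a*b) := by
      have hcu : ω (a*b) * (b * ω (a*b)) = b * ω (a*b) := by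
        calc ω (a*b) * (b * ω (a*b)) = (ω (a*b) * b) * ω (a*b) := (mul_assoc _ _ _).symm
          _ = (b * ω (a*b)) * ω (a*b) := by rw [hg_cen b]
          _ = b * (ω (a*b) * ω (a*b)) := mul_assoc _ _ _
          _ = b * ω (a*b) := by rw [hg]
      have hvu : (spow (a*b) (n+n) * a) * (b * ω (a*b)) = ω (a*b) := by
        calc (spow (a*b) (n+n) * a) * (b * ω (a*b))
            = ((spow (a*b) (n+n) * a) * b) * ω (a*b) := (mul_assoc _ _ _).symm
          _ = ω (a*b) * ω (a*b) := by rw [hlb]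
          _ = ω (a*b) := hg
      have h1 : ω (b * ω (a*b)) = ω (a*b) :=
        lemG_left (b * ω (a*b)) (spow (a*b) (n+n) * a) (ω (a*b)) hg hg_cen hcu hvu
      have h2 : ω (b * ω (a*b)) = ω b * ω (a*b) := omega_mul_c b (ω (a*b)) hg hg_cen
      rw [← h2, h1]
    -- ef is a central idempotent
    have hef : (ω a * ω b) * (ω a * ω b) = ω a * ω b := by
      calc (ω a * ω b) * (ω a * ω b) = ω a * (ω b * ω a * ω b) := by simp [mul_assoc]
        _ = ω a * (ω a * ω b * ω b) := by rw [hf_cen (ω a)]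
        _ = (ω a * ω a) * (ω b * ω b) := by simp [mul_assoc]
        _ = ω a * ω b := by rw [he, hf]
    have hef_cen : ∀ s : S, (ω a * ω b) * s = s * (ω a * ω b) := by
      intro s
      calc (ω a * ω b) * s = ω a * (ω b * s) := mul_assoc _ _ _
        _ = ω a * (s * ω b) := by rw [hf_cen s]
        _ = (ω a * s) * ω b := (mul_assoc _ _ _).symm
        _ = (s * ω a) * ω b := by rw [he_cen s]
        _ = s * (ω a * ω b) := mul_assoc _ _ _
    -- a' = a * ω a, b' = b * ω b
    have hwa' : ω (a * ω a) = ω a := by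
      rw [omega_mul_c a (ω a) he he_cen, he]
    have hwb' : ω (b * ω b) = ω b := by
      rw [omega_mul_c b (ω b) hf hf_cen, hf]
    obtain ⟨aI, haI⟩ := inv_ex (a * ω a)
    rw [hwa'] at haI
    obtain ⟨bI, hbI⟩ := inv_ex (b * ω b)
    rw [hwb'] at hbI
    have hea' : ω a * (a * ω a) = a * ω a := by
      calc ω a * (a * ω a) = (ω a * a) * ω a := (mul_assoc _ _ _).symm
        _ = (a * ω a) * ω a := by rw [he_cen a]
        _ = a * (ω a * ω a) := mul_assoc _ _ _
        _ = a * ω a := by rw [he]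
    have hfb' : ω b * (b * ω b) = b * ω b := by
      calc ω b * (b * ω b) = (ω b * b) * ω b := (mul_assoc _ _ _).symm
        _ = (b * ω b) * ω b := by rw [hf_cen b]
        _ = b * (ω b * ω b) := mul_assoc _ _ _
        _ = b * ω b := by rw [hf]
    -- c * u = u for u = a' * b', c = ef
    have hcu3 : (ω a * ω b) * ((a * ω a) * (b * ω b)) = (a * ω a) * (b * ω b) := by
      calc (ω a * ω b) * ((a * ω a) * (b * ω b))
          = ω a * (ω b * ((a * ω a) * (b * ω b))) := mul_assoc _ _ _
        _ = ω a * ((ω b * (a * ω a)) * (b * ω b)) := by simp only [mul_assoc]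
        _ = ω a * (((a * ω a) * ω b) * (b * ω b)) := by rw [hf_cen (a * ω a)]
        _ = ω a * ((a * ω a) * (ω b * (b * ω b))) := by simp only [mul_assoc]
        _ = ω a * ((a * ω a) * (b * ω b)) := by rw [hfb']
        _ = (ω a * (a * ω a)) * (b * ω b) := (mul_assoc _ _ _).symm
        _ = (a * ω a) * (b * ω b) := by rw [hea']
    -- v * u = ef for v = bI * aI
    have hvu3 : (bI * aI) * ((a * ω a) * (b * ω b)) = ω a * ω b := by
      calc (bI * aI) * ((a * ω a) * (b * ω b))
          = bI * (aI * ((a * ω a) * (b * ω b))) := mul_assoc _ _ _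
        _ = bI * ((aI * (a * ω a)) * (b * ω b)) := by simp only [mul_assoc]
        _ = bI * (ω a * (b * ω b)) := by rw [haI]
        _ = bI * ((b * ω b) * ω a) := by rw [he_cen (b * ω b)]
        _ = (bI * (b * ω b)) * ω a := (mul_assoc _ _ _).symm
        _ = ω b * ω a := by rw [hbI]
        _ = ω a * ω b := (he_cen (ω b)).symm
    have hG3 : ω ((a * ω a) * (b * ω b)) = ω a * ω b :=
      lemG_left ((a * ω a) * (b * ω b)) (bI * aI) (ω a * ω b) hef hef_cen hcu3 hvu3
    -- a' * b' = (a*b) * (ef)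
    have hkey : (a * ω a) * (b * ω b) = (a*b) * (ω a * ω b) := by
      calc (a * ω a) * (b * ω b) = a * ((ω a * b) * ω b) := by simp [mul_assoc]
        _ = a * ((b * ω a) * ω b) := by rw [he_cen b]
        _ = (a*b) * (ω a * ω b) := by simp [mul_assoc]
    have hG3' : ω (a*b) * (ω a * ω b) = ω a * ω b := by
      rw [← omega_mul_c (a*b) (ω a * ω b) hef hef_cen, ← hkey, hG3]
    -- ω (a*b) * (ω a * ω b) = ω (a*b)
    have habsorb : ω (a*b) * (ω a * ω b) = ω (a*b) := by
      calc ω (a*b) * (ω a * ω b) = (ω (a*b) * ω a) * ω b := (mul_assoc _ _ _).symm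
        _ = (ω a * ω (a*b)) * ω b := by rw [he_cen (ω (a*b))]
        _ = ω (a*b) * ω b := by rw [heg]
        _ = ω b * ω (a*b) := by rw [hf_cen (ω (a*b))]
        _ = ω (a*b) := hfg
    rw [← habsorb, hG3']
  · ext x
    simp only [Set.mem_range, Set.mem_setOf_eq]
    constructor
    · rintro ⟨s, rfl⟩
      exact hidem s
    · intro hx
      exact ⟨x, (huniq x 0 hx).symm⟩
end
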